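/- Let f₁, f₂, f₃, f₄ ∈ ℤ[t] be monic polynomials that are pairwise coprime in ℚ[t]. If |Res(f₁,f₄)| = 1 and |Res(f₂,f₄)| = 1, then there is an isomorphism of ℤ[t]-modules ℤ[t]/(f₁f₃f₄) ⊕ ℤ[t]/(f₂f₃) ≅ ℤ[t]/(f₁f₃) ⊕ ℤ[t]/(f₂f₃f₄). -/

import Mathlib

open Polynomial

/-- Multiplication by `r` as a linear map between principal quotients. -/
noncomputable def mulQ {R : Type*} [CommRing R] (r : R) (α β : R) (h : β ∣ r * α) :
    (R ⧸ Ideal.span {α}) →ₗ[R] R ⧸ Ideal.span {β} :=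
  Submodule.mapQ _ _ (LinearMap.lsmul R R r) (by
    rw [Ideal.span_le]
    intro x hx
    rw [Set.mem_singleton_iff] at hx
    subst hx
    simpa [Ideal.mem_span_singleton] using h)

lemma mulQ_mk {R : Type*} [CommRing R] (r α β : R) (h : β ∣ r * α) (x : R) :
    mulQ r α β h (Submodule.Quotient.mk x) = Submodule.Quotient.mk (r * x) :=
  Submodule.mapQ_apply _ _ _ x

/-- The Sylvester-type matrix `A(f,g)` of two integer polynomials: its first
`deg g` columns contain the coefficients of `f, tf, ..., t^{deg g - 1} f` and its last
`deg f` columns contain the coefficients of `g, tg, ..., t^{deg f - 1} g`,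
all expressed in the basis `1, t, ..., t^{deg f + deg g - 1}`. -/
noncomputable def sylvesterMatrix (f g : Polynomial ℤ) :
    Matrix (Fin (f.natDegree + g.natDegree)) (Fin (f.natDegree + g.natDegree)) ℤ :=
  Matrix.of fun i j =>
    if (j : ℕ) < g.natDegree then (Polynomial.X ^ (j : ℕ) * f).coeff (i : ℕ)
    else (Polynomial.X ^ ((j : ℕ) - g.natDegree) * g).coeff (i : ℕ)

/-- The resultant `Res(f,g)` of two integer polynomials, as the determinant of the
Sylvester matrix. -/
noncomputable def res (f g : Polynomial ℤ) : ℤ := (sylvesterMatrix f g).det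

lemma exists_comb_of_res (f g : Polynomial ℤ) (hpos : 0 < f.natDegree + g.natDegree)
    (h : IsUnit (res f g)) : ∃ u v, u * f + v * g = 1 := by
  classical
  set m := f.natDegree with hm
  set n' := g.natDegree with hn'
  set M := sylvesterMatrix f g with hM
  have hdet : IsUnit M.det := h
  set e : Fin (m + n') → ℤ := fun i => (1 : Polynomial ℤ).coeff (i : ℕ) with he
  set c : Fin (m + n') → ℤ := M⁻¹.mulVec e with hcdef
  have hc : M.mulVec c = e := by
    rw [hcdef, Matrix.mulVec_mulVec, Matrix.mul_nonsing_inv _ hdet, Matrix.one_mulVec]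
  refine ⟨∑ j : Fin (m + n'), if (j : ℕ) < n' then C (c j) * X ^ (j : ℕ) else 0,
          ∑ j : Fin (m + n'), if (j : ℕ) < n' then 0 else C (c j) * X ^ ((j : ℕ) - n'), ?_⟩
  ext i
  rw [coeff_add, Finset.sum_mul, Finset.sum_mul, finset_sum_coeff, finset_sum_coeff,
    ← Finset.sum_add_distrib]
  by_cases hi : i < m + n'
  · have h1 : (1 : Polynomial ℤ).coeff i = (M.mulVec c) ⟨i, hi⟩ := by rw [hc]
    rw [h1, Matrix.mulVec]
    simp only [dotProduct]
    refine Finset.sum_congr rfl fun j _ => ?_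
    rw [hM]
    by_cases hj : (j : ℕ) < n'
    · rw [if_pos hj, if_pos hj, zero_mul, coeff_zero, add_zero, mul_assoc, coeff_C_mul]
      simp only [sylvesterMatrix, Matrix.of_apply, if_pos hj]
      rw [if_pos (show (j : ℕ) < g.natDegree from hj)]
      exact mul_comm _ _
    · rw [if_neg hj, if_neg hj, zero_mul, coeff_zero, zero_add, mul_assoc, coeff_C_mul]
      simp only [sylvesterMatrix, Matrix.of_apply, if_neg hj]
      rw [if_neg (show ¬ (j : ℕ) < g.natDegree from hj)]
      exact mul_comm _ _
  · have hi0 : i ≠ 0 := by omega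
    rw [coeff_one, if_neg hi0]
    refine Finset.sum_eq_zero fun j _ => ?_
    by_cases hj : (j : ℕ) < n'
    · rw [if_pos hj, if_pos hj, zero_mul, coeff_zero, add_zero]
      refine coeff_eq_zero_of_natDegree_lt ?_
      have h2 : (C (c j) * X ^ (j : ℕ) * f).natDegree ≤ (j : ℕ) + m := by
        refine le_trans (natDegree_mul_le) ?_
        have := natDegree_C_mul_le (c j) (X ^ (j : ℕ) : Polynomial ℤ)
        simp only [natDegree_X_pow] at this
        omega
      omega
    · rw [if_neg hj, if_neg hj, zero_mul, coeff_zero, zero_add]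
      refine coeff_eq_zero_of_natDegree_lt ?_
      have h2 : (C (c j) * X ^ ((j : ℕ) - n') * g).natDegree ≤ ((j : ℕ) - n') + n' := by
        refine le_trans (natDegree_mul_le) ?_
        have := natDegree_C_mul_le (c j) (X ^ ((j : ℕ) - n') : Polynomial ℤ)
        simp only [natDegree_X_pow] at this
        omega
      have hjlt : (j : ℕ) < m + n' := j.isLt
      omega

lemma isCoprime_of_res (f g : Polynomial ℤ) (hf : f.Monic) (hg : g.Monic)
    (h : (res f g).natAbs = 1) : IsCoprime f g := by
  have hu : IsUnit (res f g) := Int.isUnit_iff_natAbs_eq.mpr h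
  rcases Nat.eq_zero_or_pos (f.natDegree + g.natDegree) with h0 | hpos
  · have hf1 : f = 1 := hf.natDegree_eq_zero.mp (by omega)
    rw [hf1]; exact isCoprime_one_left
  · obtain ⟨u, v, huv⟩ := exists_comb_of_res f g hpos hu
    exact ⟨u, v, huv⟩

set_option maxHeartbeats 1600000 in
/-- Theorem 5.1 (b), sufficiency: for monic `f₁, f₂, f₃, f₄ ∈ ℤ[t]`, pairwise coprime in
`ℚ[t]`, if `|Res(f₁,f₄)| = 1` and `|Res(f₂,f₄)| = 1` then
`ℤ[t]/(f₁f₃f₄) ⊕ ℤ[t]/(f₂f₃) ≅ ℤ[t]/(f₁f₃) ⊕ ℤ[t]/(f₂f₃f₄)` as `ℤ[t]`-modules. -/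
theorem sum_companion_iso_of_resultants (f₁ f₂ f₃ f₄ : Polynomial ℤ)
    (h₁ : f₁.Monic) (h₂ : f₂.Monic) (h₃ : f₃.Monic) (h₄ : f₄.Monic)
    (h12 : IsCoprime (f₁.map (Int.castRingHom ℚ)) (f₂.map (Int.castRingHom ℚ)))
    (h13 : IsCoprime (f₁.map (Int.castRingHom ℚ)) (f₃.map (Int.castRingHom ℚ)))
    (h14 : IsCoprime (f₁.map (Int.castRingHom ℚ)) (f₄.map (Int.castRingHom ℚ)))
    (h23 : IsCoprime (f₂.map (Int.castRingHom ℚ)) (f₃.map (Int.castRingHom ℚ)))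
    (h24 : IsCoprime (f₂.map (Int.castRingHom ℚ)) (f₄.map (Int.castRingHom ℚ)))
    (h34 : IsCoprime (f₃.map (Int.castRingHom ℚ)) (f₄.map (Int.castRingHom ℚ)))
    (hr14 : (res f₁ f₄).natAbs = 1) (hr24 : (res f₂ f₄).natAbs = 1) :
    Nonempty (((Polynomial ℤ ⧸ Ideal.span {f₁ * f₃ * f₄}) ×
          (Polynomial ℤ ⧸ Ideal.span {f₂ * f₃})) ≃ₗ[Polynomial ℤ]
        ((Polynomial ℤ ⧸ Ideal.span {f₁ * f₃}) ×
          (Polynomial ℤ ⧸ Ideal.span {f₂ * f₃ * f₄}))) := by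
  have c14 : IsCoprime f₁ f₄ := isCoprime_of_res f₁ f₄ h₁ h₄ hr14
  have c24 : IsCoprime f₂ f₄ := isCoprime_of_res f₂ f₄ h₂ h₄ hr24
  obtain ⟨p, q, hpq⟩ := c14.mul_left c24
  -- hpq : p * (f₁ * f₂) + q * f₄ = 1
  set Φ : ((Polynomial ℤ ⧸ Ideal.span {f₁ * f₃ * f₄}) ×
        (Polynomial ℤ ⧸ Ideal.span {f₂ * f₃})) →ₗ[Polynomial ℤ]
      ((Polynomial ℤ ⧸ Ideal.span {f₁ * f₃}) ×
        (Polynomial ℤ ⧸ Ideal.span {f₂ * f₃ * f₄})) :=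
    LinearMap.prod
      ((mulQ q (f₁ * f₃ * f₄) (f₁ * f₃) ⟨q * f₄, by ring⟩).comp (LinearMap.fst _ _ _)
        + (mulQ (f₁ * p) (f₂ * f₃) (f₁ * f₃) ⟨p * f₂, by ring⟩).comp (LinearMap.snd _ _ _))
      ((mulQ (-f₂) (f₁ * f₃ * f₄) (f₂ * f₃ * f₄) ⟨-f₁, by ring⟩).comp (LinearMap.fst _ _ _)
        + (mulQ f₄ (f₂ * f₃) (f₂ * f₃ * f₄) ⟨1, by ring⟩).comp (LinearMap.snd _ _ _))
    with hΦ
  set Ψ : ((Polynomial ℤ ⧸ Ideal.span {f₁ * f₃}) ×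
        (Polynomial ℤ ⧸ Ideal.span {f₂ * f₃ * f₄})) →ₗ[Polynomial ℤ]
      ((Polynomial ℤ ⧸ Ideal.span {f₁ * f₃ * f₄}) ×
        (Polynomial ℤ ⧸ Ideal.span {f₂ * f₃})) :=
    LinearMap.prod
      ((mulQ f₄ (f₁ * f₃) (f₁ * f₃ * f₄) ⟨1, by ring⟩).comp (LinearMap.fst _ _ _)
        + (mulQ (-(f₁ * p)) (f₂ * f₃ * f₄) (f₁ * f₃ * f₄) ⟨-(p * f₂), by ring⟩).comp
            (LinearMap.snd _ _ _))
      ((mulQ f₂ (f₁ * f₃) (f₂ * f₃) ⟨f₁, by ring⟩).comp (LinearMap.fst _ _ _)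
        + (mulQ q (f₂ * f₃ * f₄) (f₂ * f₃) ⟨q * f₄, by ring⟩).comp (LinearMap.snd _ _ _))
    with hΨ
  have key : ∀ (γ a b : Polynomial ℤ),
      (Submodule.Quotient.mk a + Submodule.Quotient.mk b :
        Polynomial ℤ ⧸ Ideal.span {γ}) = Submodule.Quotient.mk (a + b) := by
    intro γ a b
    exact (Submodule.Quotient.mk_add _).symm
  refine ⟨LinearEquiv.ofLinear Φ Ψ ?_ ?_⟩
  · apply LinearMap.ext
    rintro ⟨x, y⟩
    obtain ⟨x, rfl⟩ := Submodule.Quotient.mk_surjective _ x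
    obtain ⟨y, rfl⟩ := Submodule.Quotient.mk_surjective _ y
    simp only [hΦ, hΨ, LinearMap.comp_apply, LinearMap.prod_apply, Function.prod,
      LinearMap.add_apply, LinearMap.fst_apply, LinearMap.snd_apply, mulQ_mk, key,
      map_add, LinearMap.id_coe, id_eq, Prod.mk.injEq]
    constructor
    · exact congrArg _ (by linear_combination x * hpq)
    · exact congrArg _ (by linear_combination y * hpq)
  · apply LinearMap.ext
    rintro ⟨x, y⟩
    obtain ⟨x, rfl⟩ := Submodule.Quotient.mk_surjective _ x
    obtain ⟨y, rfl⟩ := Submodule.Quotient.mk_surjective _ y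
    simp only [hΦ, hΨ, LinearMap.comp_apply, LinearMap.prod_apply, Function.prod,
      LinearMap.add_apply, LinearMap.fst_apply, LinearMap.snd_apply, mulQ_mk, key,
      map_add, LinearMap.id_coe, id_eq, Prod.mk.injEq]
    constructor
    · exact congrArg _ (by linear_combination x * hpq)
    · exact congrArg _ (by linear_combination y * hpq)
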